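/- Let r ≥ 1 and m ≥ 1 be integers, set n = m·(r+1)(r+2)/2, and let g(s) = 2^{−(r+2)} ∑_{i=0}^{r+2} binom(r+2, i) (1+s)^{binom(r+2,2) − i(r+2−i)} (1−s)^{i(r+2−i)}. Let k < nr/(r+2) and d < n be positive integers satisfying d · 2^{k − nr/(r+2)} · min_{0<s≤1} g(s)^{n/binom(r+2,2)} s^{−d} < 1. Then there exists a binary linear code C ⊆ F_2^n of dimension at least k and minimum distance at least d such that every coordinate of C has two disjoint recovering sets, each of size at most r. -/

import Mathlib

set_option linter.unusedSectionVars false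
set_option linter.unusedVariables false
set_option maxHeartbeats 1000000

set_option linter.unusedSectionVars false

namespace GVLRC
open Finset

lemma zmod2_cases (a : ZMod 2) : a = 0 ∨ a = 1 := by revert a; decide

lemma zmod2_add_self (a : ZMod 2) : a + a = 0 := by revert a; decide

lemma zmod2_eq_of_add_eq_zero {a t : ZMod 2} (h : a + t = 0) : a = t := by revert h; revert a t; decide

noncomputable def χ (a : ZMod 2) : ℝ := if a = 0 then 1 else -1

lemma χ_zero : χ 0 = 1 := by simp [χ]

lemma χ_add (a b : ZMod 2) : χ (a + b) = χ a * χ b := by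
  rcases zmod2_cases a with h | h <;> rcases zmod2_cases b with h' | h' <;>
    subst h <;> subst h' <;>
    simp [χ, show (1 + 1 : ZMod 2) = 0 from by decide]

lemma χ_sum {ι : Type*} (s : Finset ι) (f : ι → ZMod 2) :
    χ (∑ i ∈ s, f i) = ∏ i ∈ s, χ (f i) := by
  induction s using Finset.cons_induction with
  | empty => simp [χ]
  | cons a s ha ih => rw [Finset.sum_cons, Finset.prod_cons, χ_add, ih]

lemma zmod2_sum_eq {M : Type*} [AddCommMonoid M] (f : ZMod 2 → M) :
    ∑ b : ZMod 2, f b = f 0 + f 1 := by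
  have h : (univ : Finset (ZMod 2)) = {0, 1} := by decide
  rw [h, Finset.sum_pair (by decide)]

section wt
variable {α : Type*} [Fintype α] [DecidableEq α]

def wt (x : α → ZMod 2) : ℕ := #(univ.filter fun j => x j ≠ 0)

noncomputable def ω (s : ℝ) (x : α → ZMod 2) : ℝ := ∏ j, if x j = 0 then 1 else s

lemma ω_eq (s : ℝ) (x : α → ZMod 2) : ω s x = s ^ wt x := by
  rw [ω, wt, Finset.prod_ite, Finset.prod_const, Finset.prod_const, one_pow, one_mul]

lemma ω_nonneg {s : ℝ} (hs : 0 ≤ s) (x : α → ZMod 2) : 0 ≤ ω s x := by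
  rw [ω_eq]; positivity

lemma ω_one (x : α → ZMod 2) : ω 1 x = 1 := by
  rw [ω_eq, one_pow]

lemma ω_pos {s : ℝ} (hs : 0 < s) (x : α → ZMod 2) : 0 < ω s x := by
  rw [ω_eq]; positivity

lemma wt_reindex {β : Type*} [Fintype β] [DecidableEq β] (e : α ≃ β) (c : β → ZMod 2) :
    wt (fun j => c (e j)) = wt c := by
  apply Finset.card_nbij' (i := fun a => e a) (j := fun b => e.symm b) <;> simp [Set.MapsTo, Set.LeftInvOn, Set.RightInvOn]

lemma wt_zero : wt (0 : α → ZMod 2) = 0 := by simp [wt]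

lemma wt_eq_hammingNorm (x : α → ZMod 2) : wt x = hammingNorm x := rfl

end wt



variable {q : ℕ}

abbrev Edg (q : ℕ) := {p : Fin q × Fin q // p.1 < p.2}

def inc (v : Fin q) (e : Edg q) : Prop := e.1.1 = v ∨ e.1.2 = v

instance (v : Fin q) : DecidablePred (inc v) := fun _ =>
  inferInstanceAs (Decidable (_ ∨ _))

/-- the other endpoint of an edge (vs `v`) -/
def oth (v : Fin q) (e : Edg q) : Fin q := if e.1.1 = v then e.1.2 else e.1.1

/-- the edge joining two distinct vertices -/
def mke (v w : Fin q) (h : v ≠ w) : Edg q :=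
  if hlt : v < w then ⟨(v, w), hlt⟩ else ⟨(w, v), h.lt_or_gt.resolve_left hlt⟩

lemma inc_mke (v w : Fin q) (h : v ≠ w) : inc v (mke v w h) := by
  unfold mke; split_ifs <;> [exact Or.inl rfl; exact Or.inr rfl]

lemma oth_ne (v : Fin q) (e : Edg q) : oth v e ≠ v := by
  have hne : e.1.1 ≠ e.1.2 := ne_of_lt e.2
  unfold oth; split_ifs with h1
  · rw [← h1]; exact hne.symm
  · exact h1

lemma mke_eq {v w : Fin q} (h : v ≠ w) (e : Edg q)
    (h1 : (e.1.1 = v ∧ e.1.2 = w) ∨ (e.1.1 = w ∧ e.1.2 = v)) : mke v w h = e := by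
  unfold mke
  rcases h1 with ⟨ha, hb⟩ | ⟨ha, hb⟩
  · rw [dif_pos (by rw [← ha, ← hb]; exact e.2)]
    exact Subtype.ext (Prod.ext ha.symm hb.symm)
  · rw [dif_neg (by rw [← ha, ← hb]; exact not_lt.2 (le_of_lt e.2))]
    exact Subtype.ext (Prod.ext ha.symm hb.symm)

lemma oth_mke (v w : Fin q) (h : v ≠ w) : oth v (mke v w h) = w := by
  unfold mke
  split_ifs with h1
  · unfold oth; simp
  · unfold oth
    have : w ≠ v := h.symm
    simp [this]

lemma mke_oth {v : Fin q} {e : Edg q} (he : inc v e) (h : v ≠ oth v e) :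
    mke v (oth v e) h = e := by
  apply mke_eq
  unfold oth at *
  by_cases h1 : e.1.1 = v
  · rw [if_pos h1]; exact Or.inl ⟨h1, rfl⟩
  · rw [if_neg h1]; exact Or.inr ⟨rfl, he.resolve_left h1⟩

lemma card_inc_le (v : Fin q) : #(univ.filter fun e : Edg q => inc v e) ≤ q - 1 := by
  have h2 : #(univ.filter fun w : Fin q => w ≠ v) = q - 1 := by
    rw [Finset.filter_ne', Finset.card_erase_of_mem (mem_univ v), Finset.card_univ,
      Fintype.card_fin]
  rw [← h2]
  apply Finset.card_le_card_of_injOn (oth v)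
  · intro e _
    exact Finset.mem_filter.2 ⟨mem_univ _, oth_ne v e⟩
  · intro e he e' he' hee
    have hi : inc v e := by simpa using he
    have hi' : inc v e' := by simpa using he'
    rw [← mke_oth hi (Ne.symm (oth_ne v e)), ← mke_oth hi' (Ne.symm (oth_ne v e'))]
    congr 1

lemma card_Edg (q : ℕ) : Fintype.card (Edg q) = q.choose 2 := by
  have h2c : 2 * q.choose 2 = q * (q - 1) := by
    rw [Nat.choose_two_right, Nat.mul_div_cancel']
    rcases Nat.even_or_odd q with h | h
    · exact Dvd.dvd.mul_right h.two_dvd _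
    · rcases q with _ | p
      · simp
      · have : Even (p + 1 - 1) := by
          simpa using Nat.Odd.sub_odd h odd_one
        exact Dvd.dvd.mul_left this.two_dvd _
  have hswap : #(univ.filter fun p : Fin q × Fin q => p.1 < p.2)
      = #(univ.filter fun p : Fin q × Fin q => p.2 < p.1) := by
    apply Finset.card_nbij' (fun p => (p.2, p.1)) (fun p => (p.2, p.1)) <;>
      simp [Finset.mem_filter, Set.MapsTo, Set.LeftInvOn, Set.RightInvOn]
  have hunion : (univ.filter fun p : Fin q × Fin q => p.1 < p.2) ∪
      (univ.filter fun p : Fin q × Fin q => p.2 < p.1)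
      = univ.filter (fun p : Fin q × Fin q => p.1 ≠ p.2) := by
    ext p
    simp only [Finset.mem_union, Finset.mem_filter, mem_univ, true_and]
    constructor
    · rintro (h | h); exacts [ne_of_lt h, (ne_of_lt h).symm]
    · intro h; exact lt_or_gt_of_ne h
  have hdisj : Disjoint (univ.filter fun p : Fin q × Fin q => p.1 < p.2)
      (univ.filter fun p : Fin q × Fin q => p.2 < p.1) := by
    rw [Finset.disjoint_filter]
    intro p _ h1
    exact not_lt.2 (le_of_lt h1)
  have hoff : (univ.filter fun p : Fin q × Fin q => p.1 ≠ p.2)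
      = (univ : Finset (Fin q)).offDiag := by
    ext p
    simp [Finset.mem_offDiag]
  have hcard : #(univ.filter fun p : Fin q × Fin q => p.1 < p.2) +
      #(univ.filter fun p : Fin q × Fin q => p.2 < p.1) = q * q - q := by
    rw [← Finset.card_union_of_disjoint hdisj, hunion, hoff, Finset.offDiag_card,
      Finset.card_univ, Fintype.card_fin]
  rw [Fintype.card_subtype]
  have hq : q * (q - 1) = q * q - q := by
    rcases q with _ | p
    · simp
    · rw [Nat.succ_sub_one, Nat.mul_succ]; omega
  omega

def check (v : Fin q) (x : Edg q → ZMod 2) : ZMod 2 :=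
  ∑ e ∈ univ.filter (fun e => inc v e), x e

lemma pairing (t : Fin q → ZMod 2) (x : Edg q → ZMod 2) :
    ∑ e : Edg q, (t e.1.1 + t e.1.2) * x e = ∑ v : Fin q, t v * check v x := by
  have h1 : ∀ v : Fin q, t v * check v x
      = ∑ e : Edg q, if inc v e then t v * x e else 0 := by
    intro v
    rw [check, Finset.mul_sum, Finset.sum_filter]
  simp_rw [h1]
  rw [Finset.sum_comm]
  apply Finset.sum_congr rfl
  intro e _
  have key : ∀ v : Fin q, (if inc v e then t v * x e else 0)
      = if v ∈ ({e.1.1, e.1.2} : Finset (Fin q)) then t v * x e else 0 := by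
    intro v
    refine if_congr ?_ rfl rfl
    simp [inc, eq_comm]
  rw [Finset.sum_congr rfl fun v _ => key v, Finset.sum_ite_mem, Finset.univ_inter,
    Finset.sum_pair (ne_of_lt e.2), add_mul]


lemma mke_cases (v w : Fin q) (h : v ≠ w) :
    ((mke v w h : Edg q) : Fin q × Fin q) = (v, w) ∨ ((mke v w h : Edg q) : Fin q × Fin q) = (w, v) := by
  unfold mke; split_ifs <;> simp

lemma zmod2_ne_zero (a : ZMod 2) : a ≠ 0 ↔ a = 1 := by revert a; decide

lemma zmod2_add_eq_one {a b : ZMod 2} : a + b = 1 ↔ (a = 1 ∧ b = 0) ∨ (a = 0 ∧ b = 1) := by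
  revert a b; decide

lemma two_mul_choose_two (q : ℕ) : 2 * q.choose 2 = q * (q - 1) := by
  rw [Nat.choose_two_right, Nat.mul_div_cancel']
  rcases Nat.even_or_odd q with h | h
  · exact Dvd.dvd.mul_right h.two_dvd _
  · rcases q with _ | p
    · simp
    · have : Even (p + 1 - 1) := by simpa using Nat.Odd.sub_odd h odd_one
      exact Dvd.dvd.mul_left this.two_dvd _

def C1fin (q : ℕ) : Finset (Edg q → ZMod 2) :=
  univ.filter fun x => ∀ v, check v x = 0

lemma zero_mem_C1fin (q : ℕ) : (0 : Edg q → ZMod 2) ∈ C1fin q := by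
  refine Finset.mem_filter.2 ⟨mem_univ _, fun v => ?_⟩
  simp [check]

lemma block_char (q : ℕ) (s : ℝ) :
    (2 : ℝ) ^ q * ∑ x ∈ C1fin q, ω s x
      = ∑ t : Fin q → ZMod 2, ∏ e : Edg q, (1 + s * χ (t e.1.1 + t e.1.2)) := by
  have hone : (1 : ZMod 2) ≠ 0 := by decide
  have hsumb : ∀ c : ZMod 2, (1 + s * χ c)
      = ∑ b : ZMod 2, if b = 0 then (1:ℝ) else s * χ c := by
    intro c
    rw [zmod2_sum_eq]
    simp [hone]
  have hF : ∀ (c b : ZMod 2), (if b = 0 then (1:ℝ) else s * χ c)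
      = (if b = 0 then 1 else s) * χ (c * b) := by
    intro c b
    rcases zmod2_cases b with h | h <;> subst h <;> simp [χ_zero, hone]
  have step1 : ∀ t : Fin q → ZMod 2, ∏ e : Edg q, (1 + s * χ (t e.1.1 + t e.1.2))
      = ∑ x : Edg q → ZMod 2, ω s x * χ (∑ v, t v * check v x) := by
    intro t
    calc ∏ e : Edg q, (1 + s * χ (t e.1.1 + t e.1.2))
        = ∏ e : Edg q, ∑ b : ZMod 2, (if b = 0 then (1:ℝ)
            else s * χ (t e.1.1 + t e.1.2)) :=
          Finset.prod_congr rfl fun e _ => hsumb _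
      _ = ∑ x ∈ Fintype.piFinset (fun _ : Edg q => (univ : Finset (ZMod 2))),
            ∏ e : Edg q, (if x e = 0 then (1:ℝ) else s * χ (t e.1.1 + t e.1.2)) :=
          Finset.prod_univ_sum _ _
      _ = ∑ x : Edg q → ZMod 2, ω s x * χ (∑ e : Edg q, (t e.1.1 + t e.1.2) * x e) := by
          rw [Fintype.piFinset_univ]
          refine Finset.sum_congr rfl fun x _ => ?_
          rw [ω, χ_sum, ← Finset.prod_mul_distrib]
          exact Finset.prod_congr rfl fun e _ => hF _ _
      _ = ∑ x : Edg q → ZMod 2, ω s x * χ (∑ v, t v * check v x) := by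
          refine Finset.sum_congr rfl fun x _ => ?_
          rw [pairing]
  have step2 : ∀ x : Edg q → ZMod 2,
      ∑ t : Fin q → ZMod 2, χ (∑ v, t v * check v x)
        = if (∀ v, check v x = 0) then (2:ℝ)^q else 0 := by
    intro x
    have hswap := Finset.prod_univ_sum (fun _ : Fin q => (univ : Finset (ZMod 2)))
      (fun v b => χ (b * check v x))
    rw [Fintype.piFinset_univ] at hswap
    have hc : ∑ t : Fin q → ZMod 2, χ (∑ v, t v * check v x)
        = ∏ v, (1 + χ (check v x)) := by
      calc ∑ t : Fin q → ZMod 2, χ (∑ v, t v * check v x)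
          = ∑ t : Fin q → ZMod 2, ∏ v, χ (t v * check v x) :=
            Finset.sum_congr rfl fun t _ => χ_sum _ _
        _ = ∏ v, ∑ b : ZMod 2, χ (b * check v x) := hswap.symm
        _ = ∏ v, (1 + χ (check v x)) := by
            refine Finset.prod_congr rfl fun v _ => ?_
            rw [zmod2_sum_eq]
            simp [χ_zero]
    rw [hc]
    by_cases hall : ∀ v, check v x = 0
    · rw [if_pos hall]
      calc ∏ v : Fin q, (1 + χ (check v x)) = ∏ _v : Fin q, (2:ℝ) :=
            Finset.prod_congr rfl fun v _ => by rw [hall v, χ_zero]; norm_num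
        _ = (2:ℝ)^q := by rw [Finset.prod_const, Finset.card_univ, Fintype.card_fin]
    · rw [if_neg hall]
      push_neg at hall
      obtain ⟨v0, hv0⟩ := hall
      refine Finset.prod_eq_zero (mem_univ v0) ?_
      rw [(zmod2_ne_zero _).1 hv0]
      simp [χ]
  calc (2 : ℝ) ^ q * ∑ x ∈ C1fin q, ω s x
      = ∑ x ∈ C1fin q, ω s x * 2^q := by rw [← Finset.sum_mul, mul_comm]
    _ = ∑ x : Edg q → ZMod 2, if (∀ v, check v x = 0) then ω s x * 2^q else 0 :=
        Finset.sum_filter _ _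
    _ = ∑ x : Edg q → ZMod 2, ω s x * (if (∀ v, check v x = 0) then (2:ℝ)^q else 0) := by
        refine Finset.sum_congr rfl fun x _ => ?_
        split_ifs <;> simp
    _ = ∑ x : Edg q → ZMod 2, ω s x * ∑ t : Fin q → ZMod 2, χ (∑ v, t v * check v x) := by
        refine Finset.sum_congr rfl fun x _ => ?_
        rw [step2]
    _ = ∑ x : Edg q → ZMod 2, ∑ t : Fin q → ZMod 2, ω s x * χ (∑ v, t v * check v x) := by
        refine Finset.sum_congr rfl fun x _ => ?_
        rw [Finset.mul_sum]
    _ = ∑ t : Fin q → ZMod 2, ∑ x : Edg q → ZMod 2, ω s x * χ (∑ v, t v * check v x) :=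
        Finset.sum_comm
    _ = ∑ t : Fin q → ZMod 2, ∏ e : Edg q, (1 + s * χ (t e.1.1 + t e.1.2)) :=
        Finset.sum_congr rfl fun t _ => (step1 t).symm

lemma cut_weight (q : ℕ) (t : Fin q → ZMod 2) :
    #(univ.filter fun e : Edg q => t e.1.1 + t e.1.2 = 1)
      = #(univ.filter fun v => t v = 1) * (q - #(univ.filter fun v => t v = 1)) := by
  have hcompl : q - #(univ.filter fun v => t v = 1) = #(univ.filter fun v => t v = 0) := by
    have h := Finset.card_filter_add_card_filter_not
      (s := (univ : Finset (Fin q))) (fun v => t v = 1)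
    have hfe : (univ.filter fun v => ¬ t v = 1) = univ.filter fun v => t v = 0 := by
      refine Finset.filter_congr fun v _ => ?_
      rcases zmod2_cases (t v) with h' | h' <;> simp [h']
    rw [hfe, Finset.card_univ, Fintype.card_fin] at h
    omega
  rw [hcompl, ← Finset.card_product]
  apply Finset.card_bij'
    (i := fun (e : Edg q) (_ : e ∈ univ.filter fun e : Edg q => t e.1.1 + t e.1.2 = 1) =>
      if t e.1.1 = 1 then e.1 else (e.1.2, e.1.1))
    (j := fun (p : Fin q × Fin q)
      (hp : p ∈ (univ.filter fun v => t v = 1) ×ˢ (univ.filter fun v => t v = 0)) =>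
      mke p.1 p.2 (by
      have h1 : t p.1 = 1 := (Finset.mem_filter.1 (Finset.mem_product.1 hp).1).2
      have h2 : t p.2 = 0 := (Finset.mem_filter.1 (Finset.mem_product.1 hp).2).2
      intro hc
      rw [hc, h2] at h1
      exact absurd h1 (by decide)))
  case hi =>
    intro e he
    have hsum : t e.1.1 + t e.1.2 = 1 := (Finset.mem_filter.1 he).2
    rcases zmod2_add_eq_one.1 hsum with ⟨h1, h2⟩ | ⟨h1, h2⟩
    · rw [if_pos h1]
      exact Finset.mem_product.2 ⟨Finset.mem_filter.2 ⟨mem_univ _, h1⟩,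
        Finset.mem_filter.2 ⟨mem_univ _, h2⟩⟩
    · rw [if_neg (by rw [h1]; decide)]
      exact Finset.mem_product.2 ⟨Finset.mem_filter.2 ⟨mem_univ _, h2⟩,
        Finset.mem_filter.2 ⟨mem_univ _, h1⟩⟩
  case hj =>
    intro p hp
    have h1 : t p.1 = 1 := (Finset.mem_filter.1 (Finset.mem_product.1 hp).1).2
    have h2 : t p.2 = 0 := (Finset.mem_filter.1 (Finset.mem_product.1 hp).2).2
    refine Finset.mem_filter.2 ⟨mem_univ _, ?_⟩
    rcases mke_cases p.1 p.2 _ with hm | hm <;> rw [hm]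
    · rw [h1, h2]; decide
    · rw [h1, h2]; decide
  case left_inv =>
    intro e he
    have hsum : t e.1.1 + t e.1.2 = 1 := (Finset.mem_filter.1 he).2
    rcases zmod2_add_eq_one.1 hsum with ⟨h1, h2⟩ | ⟨h1, h2⟩
    · have hh : (if t e.1.1 = 1 then e.1 else (e.1.2, e.1.1)) = e.1 := if_pos h1
      refine mke_eq _ _ ?_
      rw [hh]
      exact Or.inl ⟨rfl, rfl⟩
    · have hh : (if t e.1.1 = 1 then e.1 else (e.1.2, e.1.1)) = (e.1.2, e.1.1) := by
        rw [if_neg (by rw [h1]; decide)]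
      refine mke_eq _ _ ?_
      rw [hh]
      exact Or.inr ⟨rfl, rfl⟩
  case right_inv =>
    intro p hp
    have h1 : t p.1 = 1 := (Finset.mem_filter.1 (Finset.mem_product.1 hp).1).2
    have h2 : t p.2 = 0 := (Finset.mem_filter.1 (Finset.mem_product.1 hp).2).2
    rcases mke_cases p.1 p.2 _ with hm | hm <;> rw [hm]
    · simp [h1]
    · simp [h1, h2, show (0 : ZMod 2) ≠ 1 from by decide]

lemma sum_by_ones (q : ℕ) (h : ℕ → ℝ) :
    ∑ t : Fin q → ZMod 2, h #(univ.filter fun v => t v = 1)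
      = ∑ i ∈ range (q + 1), (q.choose i : ℝ) * h i := by
  have step : ∑ t : Fin q → ZMod 2, h #(univ.filter fun v => t v = 1)
      = ∑ S ∈ (univ : Finset (Fin q)).powerset, h #S := by
    apply Finset.sum_nbij' (i := fun (t : Fin q → ZMod 2) => univ.filter fun v => t v = 1)
      (j := fun (S : Finset (Fin q)) (v : Fin q) => if v ∈ S then (1 : ZMod 2) else 0)
    case hi => intro t _; exact Finset.mem_powerset.2 (Finset.filter_subset _ _)
    case hj => intro S _; exact mem_univ _
    case left_neg =>
      intro t _
      funext v
      rcases zmod2_cases (t v) with h' | h' <;>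
        simp [Finset.mem_filter, h', show ¬ ((0:ZMod 2) = 1) from by decide]
    case right_neg =>
      intro S _
      ext v
      simp only [Finset.mem_filter, mem_univ, true_and]
      by_cases hv : v ∈ S
      · simp [hv]
      · simp [hv]
    case h =>
      intro t _
      rfl
  rw [step, Finset.sum_powerset]
  have hcu : #(univ : Finset (Fin q)) = q := by
    rw [Finset.card_univ, Fintype.card_fin]
  rw [hcu]
  refine Finset.sum_congr rfl fun i _ => ?_
  have hconst : ∑ S ∈ Finset.powersetCard i (univ : Finset (Fin q)), h #S
      = ∑ _S ∈ Finset.powersetCard i (univ : Finset (Fin q)), h i := by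
    refine Finset.sum_congr rfl fun S hS => ?_
    rw [(Finset.mem_powersetCard.1 hS).2]
  rw [hconst, Finset.sum_const, Finset.card_powersetCard, hcu, nsmul_eq_mul]

noncomputable def gfun (q : ℕ) (s : ℝ) : ℝ :=
  ((2:ℝ)^q)⁻¹ * ∑ i ∈ range (q + 1), (q.choose i : ℝ)
    * (1 + s)^(q.choose 2 - i * (q - i)) * (1 - s)^(i * (q - i))

lemma block_W (q : ℕ) (s : ℝ) : ∑ x ∈ C1fin q, ω s x = gfun q s := by
  have h2 : ((2:ℝ)^q) ≠ 0 := by positivity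
  have main : (2 : ℝ) ^ q * ∑ x ∈ C1fin q, ω s x
      = ∑ i ∈ range (q + 1), (q.choose i : ℝ)
        * (1 + s)^(q.choose 2 - i * (q - i)) * (1 - s)^(i * (q - i)) := by
    rw [block_char]
    have hpt : ∀ c : ZMod 2, (1 + s * χ c) = if c = 0 then 1 + s else 1 - s := by
      intro c
      rcases zmod2_cases c with h | h <;> subst h <;>
        simp [χ, show (1 : ZMod 2) ≠ 0 from by decide] <;> ring
    have hper : ∀ t : Fin q → ZMod 2,
        ∏ e : Edg q, (1 + s * χ (t e.1.1 + t e.1.2))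
          = (1 + s)^(q.choose 2 - #(univ.filter fun v => t v = 1) * (q - #(univ.filter fun v => t v = 1)))
            * (1 - s)^(#(univ.filter fun v => t v = 1) * (q - #(univ.filter fun v => t v = 1))) := by
      intro t
      have hprod : ∏ e : Edg q, (1 + s * χ (t e.1.1 + t e.1.2))
          = ∏ e : Edg q, (if t e.1.1 + t e.1.2 = 0 then 1 + s else 1 - s) :=
        Finset.prod_congr rfl fun e _ => hpt _
      rw [hprod, Finset.prod_ite, Finset.prod_const, Finset.prod_const]
      have hne : (univ.filter fun e : Edg q => ¬ (t e.1.1 + t e.1.2 = 0))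
          = univ.filter fun e : Edg q => t e.1.1 + t e.1.2 = 1 := by
        refine Finset.filter_congr fun e _ => ?_
        rcases zmod2_cases (t e.1.1 + t e.1.2) with h' | h' <;> simp [h']
      rw [hne, cut_weight]
      congr 2
      have hsplit := Finset.card_filter_add_card_filter_not
        (s := (univ : Finset (Edg q))) (fun e => t e.1.1 + t e.1.2 = 0)
      have hne2 : (univ.filter fun e : Edg q => ¬ (t e.1.1 + t e.1.2 = 0))
          = univ.filter fun e : Edg q => t e.1.1 + t e.1.2 = 1 := by
        refine Finset.filter_congr fun e _ => ?_
        rcases zmod2_cases (t e.1.1 + t e.1.2) with h' | h' <;> simp [h']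
      rw [hne2] at hsplit
      have hcard : #(univ : Finset (Edg q)) = q.choose 2 := by
        rw [Finset.card_univ, card_Edg]
      rw [hcard] at hsplit
      rw [← cut_weight]
      omega
    have := Finset.sum_congr rfl (fun (t : Fin q → ZMod 2) (_ : t ∈ univ) => hper t)
    rw [this]
    rw [sum_by_ones q (fun i => (1 + s)^(q.choose 2 - i * (q - i)) * (1 - s)^(i * (q - i)))]
    exact Finset.sum_congr rfl fun i _ => by ring
  rw [gfun, ← main, inv_mul_cancel_left₀ h2]

lemma card_C1 (q : ℕ) (hq : 2 ≤ q) : (#(C1fin q) : ℝ) = 2^(q.choose 2 + 1 - q) := by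
  have h1 : (#(C1fin q) : ℝ) = gfun q 1 := by
    rw [← block_W]
    rw [Finset.sum_congr rfl fun x _ => ω_one x, Finset.sum_const, nsmul_eq_mul, mul_one]
  have hCq : q ≤ q.choose 2 + 1 := by
    have h2c := two_mul_choose_two q
    have : 2 * (q - 1) ≤ q * (q - 1) := Nat.mul_le_mul_right _ hq
    omega
  rw [h1, gfun]
  have hsum : ∑ i ∈ range (q + 1), (q.choose i : ℝ)
      * (1 + 1)^(q.choose 2 - i * (q - i)) * (1 - 1)^(i * (q - i))
      = 2^(q.choose 2) + 2^(q.choose 2) := by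
    rw [Finset.sum_range_succ]
    have hlast : (q.choose q : ℝ) * (1 + 1)^(q.choose 2 - q * (q - q)) * (1 - 1)^(q * (q - q))
        = 2^(q.choose 2) := by
      rw [Nat.choose_self, Nat.sub_self, Nat.mul_zero, Nat.sub_zero, pow_zero]
      norm_num
    have hrest : ∑ i ∈ range q, (q.choose i : ℝ)
        * (1 + 1)^(q.choose 2 - i * (q - i)) * (1 - 1)^(i * (q - i)) = 2^(q.choose 2) := by
      have h0mem : 0 ∈ range q := Finset.mem_range.2 (by omega)
      rw [Finset.sum_eq_single_of_mem 0 h0mem]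
      · rw [Nat.choose_zero_right, Nat.zero_mul, Nat.sub_zero, pow_zero]
        norm_num
      · intro i hi hne
        have hiq : i < q := Finset.mem_range.1 hi
        have hpos : i * (q - i) ≠ 0 := by
          apply Nat.mul_ne_zero
          · omega
          · omega
        rw [show (1:ℝ) - 1 = 0 from by norm_num, zero_pow hpos]
        ring
    rw [hlast, hrest]
  rw [hsum]
  have : (2:ℝ)^(q.choose 2) + 2^(q.choose 2) = 2^(q.choose 2 + 1) := by ring
  rw [this, pow_sub₀ (2:ℝ) (by norm_num) hCq]
  ring


section multi
variable (q m : ℕ)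

def C0pred (x : Fin m × Edg q → ZMod 2) : Prop :=
  ∀ (b : Fin m) (v : Fin q), check v (fun e => x (b, e)) = 0

instance : DecidablePred (C0pred q m) := fun _ =>
  inferInstanceAs (Decidable (∀ _, _))

def C0fin : Finset (Fin m × Edg q → ZMod 2) := univ.filter (C0pred q m)

lemma zero_mem_C0fin : (0 : Fin m × Edg q → ZMod 2) ∈ C0fin q m := by
  refine Finset.mem_filter.2 ⟨mem_univ _, fun b v => ?_⟩
  simp [check]

lemma W0 (s : ℝ) : ∑ x ∈ C0fin q m, ω s x = (gfun q s) ^ m := by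
  rw [← block_W]
  have h1 : (∑ x ∈ C1fin q, ω s x) ^ m = ∏ _b : Fin m, ∑ x ∈ C1fin q, ω s x := by
    rw [Finset.prod_const, Finset.card_univ, Fintype.card_fin]
  rw [h1, Finset.prod_univ_sum]
  apply Finset.sum_nbij'
    (i := fun (x : Fin m × Edg q → ZMod 2) => fun (b : Fin m) (e : Edg q) => x (b, e))
    (j := fun (g : Fin m → Edg q → ZMod 2) => fun (p : Fin m × Edg q) => g p.1 p.2)
  case hi =>
    intro x hx
    rw [Fintype.mem_piFinset]
    intro b
    exact Finset.mem_filter.2 ⟨mem_univ _, fun v => (Finset.mem_filter.1 hx).2 b v⟩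
  case hj =>
    intro g hg
    refine Finset.mem_filter.2 ⟨mem_univ _, fun b v => ?_⟩
    have := (Finset.mem_filter.1 (Fintype.mem_piFinset.1 hg b)).2 v
    exact this
  case left_neg => intro x _; rfl
  case right_neg => intro g _; rfl
  case h =>
    intro x _
    rw [ω, Fintype.prod_prod_type]
    rfl

lemma card_C1_gfun : (#(C1fin q) : ℝ) = gfun q 1 := by
  rw [← block_W]
  rw [Finset.sum_congr rfl fun x _ => ω_one x, Finset.sum_const, nsmul_eq_mul, mul_one]

lemma card_C0 (hq : 2 ≤ q) :
    (#(C0fin q m) : ℝ) = 2 ^ ((q.choose 2 + 1 - q) * m) := by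
  have h1 : (#(C0fin q m) : ℝ) = (gfun q 1) ^ m := by
    rw [← W0]
    rw [Finset.sum_congr rfl fun x _ => ω_one x, Finset.sum_const, nsmul_eq_mul, mul_one]
  rw [h1, ← card_C1_gfun, card_C1 q hq, ← pow_mul]

lemma C0fin_sum_mem {k : ℕ} (M : Fin k → (Fin m × Edg q → ZMod 2))
    (hM : ∀ i, M i ∈ C0fin q m) (u : Fin k → ZMod 2) :
    (∑ i, u i • M i) ∈ C0fin q m := by
  refine Finset.mem_filter.2 ⟨mem_univ _, fun b v => ?_⟩
  have happ : ∀ e : Edg q, (∑ i, u i • M i) (b, e) = ∑ i, u i * M i (b, e) := by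
    intro e
    rw [Finset.sum_apply]
    rfl
  have h1 : check v (fun e => (∑ i, u i • M i) (b, e))
      = ∑ e ∈ univ.filter (fun e => inc v e), ∑ i, u i * M i (b, e) := by
    rw [check]
    exact Finset.sum_congr rfl fun e _ => happ e
  rw [h1, Finset.sum_comm]
  have h2 : ∀ i, ∑ e ∈ univ.filter (fun e => inc v e), u i * M i (b, e) = 0 := by
    intro i
    rw [← Finset.mul_sum]
    have := (Finset.mem_filter.1 (hM i)).2 b v
    rw [check] at this
    rw [this, mul_zero]
  rw [Finset.sum_congr rfl fun i _ => h2 i, Finset.sum_const, smul_zero]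

lemma pi_add_self {ι : Type*} (y : ι → ZMod 2) : y + y = 0 :=
  funext fun p => zmod2_add_self (y p)

lemma exists_good (k d : ℕ) (hk : 0 < k)
    (hlt : 2 ^ k * #((C0fin q m).filter (fun c => wt c < d)) < #(C0fin q m)) :
    ∃ M : Fin k → (Fin m × Edg q → ZMod 2),
      (∀ i, M i ∈ C0fin q m) ∧
      ∀ u : Fin k → ZMod 2, u ≠ 0 → d ≤ wt (∑ i, u i • M i) := by
  classical
  set S := C0fin q m with hS
  set Bd := S.filter (fun c => wt c < d) with hBd
  set Ms : Finset (Fin k → (Fin m × Edg q → ZMod 2)) :=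
    Fintype.piFinset (fun _ => S) with hMs
  set BadM := Ms.filter
    (fun M => ∃ u : Fin k → ZMod 2, u ≠ 0 ∧ (∑ i, u i • M i) ∈ Bd) with hBadM
  have hMscard : #Ms = #S ^ k := by
    rw [hMs, Fintype.card_piFinset, Finset.prod_const, Finset.card_univ, Fintype.card_fin]
  have percard : ∀ u : Fin k → ZMod 2, u ≠ 0 →
      #(Ms.filter (fun M => (∑ i, u i • M i) ∈ Bd)) = #Bd * #S ^ (k - 1) := by
    intro u hu
    obtain ⟨i₀, hi₀⟩ : ∃ i₀, u i₀ ≠ 0 := by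
      by_contra hc
      push_neg at hc
      exact hu (funext fun i => hc i)
    have hu1 : u i₀ = 1 := (zmod2_ne_zero _).1 hi₀
    have htarget : #(Fintype.piFinset (fun i : Fin k => if i = i₀ then Bd else S))
        = #Bd * #S ^ (k - 1) := by
      rw [Fintype.card_piFinset, ← Finset.mul_prod_erase univ _ (mem_univ i₀), if_pos rfl]
      congr 1
      rw [Finset.prod_congr rfl (fun i hi => by rw [if_neg (Finset.mem_erase.1 hi).1]),
        Finset.prod_const, Finset.card_erase_of_mem (mem_univ i₀), Finset.card_univ,
        Fintype.card_fin]
    rw [← htarget]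
    have hsplitΦ : ∀ M : Fin k → (Fin m × Edg q → ZMod 2),
        (∑ i, u i • M i) = M i₀ + ∑ i ∈ univ.erase i₀, u i • M i := by
      intro M
      rw [← Finset.add_sum_erase univ (fun i => u i • M i) (mem_univ i₀), hu1, one_smul]
    have hΦσ : ∀ N : Fin k → (Fin m × Edg q → ZMod 2),
        (∑ i, u i • (Function.update N i₀ (N i₀ + ∑ j ∈ univ.erase i₀, u j • N j)) i)
          = N i₀ := by
      intro N
      rw [hsplitΦ, Function.update_self]
      have herase : ∑ i ∈ univ.erase i₀,
          u i • (Function.update N i₀ (N i₀ + ∑ j ∈ univ.erase i₀, u j • N j)) i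
          = ∑ i ∈ univ.erase i₀, u i • N i := by
        refine Finset.sum_congr rfl fun i hi => ?_
        rw [Function.update_of_ne (Finset.mem_erase.1 hi).1]
      rw [herase, add_assoc, pi_add_self, add_zero]
    apply Finset.card_bij'
      (i := fun (M : Fin k → (Fin m × Edg q → ZMod 2)) _ =>
        Function.update M i₀ (∑ i, u i • M i))
      (j := fun (N : Fin k → (Fin m × Edg q → ZMod 2)) _ =>
        Function.update N i₀ (N i₀ + ∑ j ∈ univ.erase i₀, u j • N j))
    case hi =>
      intro M hM
      rw [Fintype.mem_piFinset]
      intro j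
      by_cases hj : j = i₀
      · subst hj
        rw [Function.update_self, if_pos rfl]
        exact (Finset.mem_filter.1 hM).2
      · rw [Function.update_of_ne hj, if_neg hj]
        exact Fintype.mem_piFinset.1 (Finset.mem_filter.1 hM).1 j
    case hj =>
      intro N hN
      have hNmem : ∀ j, j ≠ i₀ → N j ∈ S := by
        intro j hj
        have := Fintype.mem_piFinset.1 hN j
        rwa [if_neg hj] at this
      have hNi₀ : N i₀ ∈ Bd := by
        have := Fintype.mem_piFinset.1 hN i₀
        rwa [if_pos rfl] at this
      have hNS : ∀ j, N j ∈ S := by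
        intro j
        by_cases hj : j = i₀
        · subst hj; exact Finset.mem_of_mem_filter _ hNi₀
        · exact hNmem j hj
      refine Finset.mem_filter.2 ⟨?_, ?_⟩
      · rw [Fintype.mem_piFinset]
        intro j
        by_cases hj : j = i₀
        · rw [hj, Function.update_self]
          have hcomb : N i₀ + ∑ j ∈ univ.erase i₀, u j • N j
              = ∑ i, (fun i => if i = i₀ then (1 : ZMod 2) else u i) i • N i := by
            rw [← Finset.add_sum_erase univ
              (fun i => (if i = i₀ then (1 : ZMod 2) else u i) • N i) (mem_univ i₀),
              if_pos rfl, one_smul]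
            congr 1
            refine Finset.sum_congr rfl fun i hi => ?_
            rw [if_neg (Finset.mem_erase.1 hi).1]
          rw [hcomb]
          exact C0fin_sum_mem q m N hNS _
        · rw [Function.update_of_ne hj]
          exact hNmem j hj
      · rw [hΦσ]
        exact hNi₀
    case left_inv =>
      intro M hM
      funext j
      by_cases hj : j = i₀
      · rw [hj, Function.update_self]
        have herase : ∑ i ∈ univ.erase i₀, u i • (Function.update M i₀ (∑ i, u i • M i)) i
            = ∑ i ∈ univ.erase i₀, u i • M i := by
          refine Finset.sum_congr rfl fun i hi => ?_
          rw [Function.update_of_ne (Finset.mem_erase.1 hi).1]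
        rw [Function.update_self, herase, hsplitΦ, add_assoc, pi_add_self, add_zero]
      · rw [Function.update_of_ne hj, Function.update_of_ne hj]
    case right_inv =>
      intro N hN
      funext j
      by_cases hj : j = i₀
      · rw [hj, Function.update_self, hΦσ]
      · rw [Function.update_of_ne hj, Function.update_of_ne hj]
  have hnonzero : #(univ.filter (fun u : Fin k → ZMod 2 => u ≠ 0)) = 2 ^ k - 1 := by
    rw [Finset.filter_ne', Finset.card_erase_of_mem (mem_univ 0), Finset.card_univ,
      Fintype.card_fun, ZMod.card, Fintype.card_fin]
  have hsub : BadM ⊆ (univ.filter (fun u : Fin k → ZMod 2 => u ≠ 0)).biUnion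
      (fun u => Ms.filter (fun M => (∑ i, u i • M i) ∈ Bd)) := by
    intro M hM
    obtain ⟨hMs', u, hu, hmem⟩ := Finset.mem_filter.1 hM
    exact Finset.mem_biUnion.2 ⟨u, Finset.mem_filter.2 ⟨mem_univ _, hu⟩,
      Finset.mem_filter.2 ⟨hMs', hmem⟩⟩
  have hBadcard : #BadM ≤ (2 ^ k - 1) * (#Bd * #S ^ (k - 1)) := by
    calc #BadM ≤ #((univ.filter (fun u : Fin k → ZMod 2 => u ≠ 0)).biUnion
        (fun u => Ms.filter (fun M => (∑ i, u i • M i) ∈ Bd))) := Finset.card_le_card hsub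
      _ ≤ ∑ u ∈ univ.filter (fun u : Fin k → ZMod 2 => u ≠ 0),
          #(Ms.filter (fun M => (∑ i, u i • M i) ∈ Bd)) := Finset.card_biUnion_le
      _ = ∑ u ∈ univ.filter (fun u : Fin k → ZMod 2 => u ≠ 0), #Bd * #S ^ (k - 1) :=
          Finset.sum_congr rfl fun u hu => percard u (Finset.mem_filter.1 hu).2
      _ = (2 ^ k - 1) * (#Bd * #S ^ (k - 1)) := by
          rw [Finset.sum_const, smul_eq_mul, hnonzero]
  have hSpos : 0 < #S := Finset.card_pos.2 ⟨0, zero_mem_C0fin q m⟩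
  have hfinal : #BadM < #Ms := by
    have h1 : (2 ^ k - 1) * (#Bd * #S ^ (k - 1)) ≤ (2 ^ k * #Bd) * #S ^ (k - 1) := by
      rw [← mul_assoc]
      exact Nat.mul_le_mul_right _ (Nat.mul_le_mul_right _ (Nat.sub_le _ _))
    have h2 : (2 ^ k * #Bd) * #S ^ (k - 1) < #S * #S ^ (k - 1) :=
      (Nat.mul_lt_mul_right (Nat.pow_pos hSpos)).2 hlt
    have h3 : #S * #S ^ (k - 1) = #S ^ k := by
      rw [← pow_succ', Nat.sub_add_cancel hk]
    omega
  have hnotsub : ¬ Ms ⊆ BadM := by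
    intro hc
    exact absurd (Finset.card_le_card hc) (Nat.not_le.2 hfinal)
  obtain ⟨M, hMMs, hMbad⟩ := Finset.not_subset.1 hnotsub
  refine ⟨M, fun i => Fintype.mem_piFinset.1 hMMs i, fun u hu => ?_⟩
  have hmemS : (∑ i, u i • M i) ∈ S :=
    C0fin_sum_mem q m M (fun i => Fintype.mem_piFinset.1 hMMs i) u
  have hnotBd : (∑ i, u i • M i) ∉ Bd := by
    intro hc
    exact hMbad (Finset.mem_filter.2 ⟨hMMs, u, hu, hc⟩)
  by_contra hwt
  exact hnotBd (Finset.mem_filter.2 ⟨hmemS, Nat.lt_of_not_le hwt⟩)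

end multi


end GVLRC

open Finset GVLRC in
/-- Finite-length Gilbert–Varshamov-type existence bound for binary LRC
codes with two disjoint recovering sets for every coordinate. -/
theorem gv_bound_two_recovering_sets (r m n k d : ℕ)
    (hr : 1 ≤ r) (hm : 1 ≤ m) (hn : 2 * n = m * (r + 1) * (r + 2))
    (hk : 0 < k) (hd : 0 < d)
    (hkn : (k : ℝ) < (n : ℝ) * r / ((r : ℝ) + 2)) (hdn : d < n)
    (hmin : ∃ s : ℝ, s ∈ Set.Ioc (0 : ℝ) 1 ∧
      (d : ℝ) * (2 : ℝ) ^ ((k : ℝ) - (n : ℝ) * r / ((r : ℝ) + 2)) *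
        (((2 : ℝ) ^ (r + 2))⁻¹ * ∑ i ∈ Finset.range (r + 3), ((r + 2).choose i : ℝ) *
            (1 + s) ^ ((r + 2).choose 2 - i * (r + 2 - i)) *
            (1 - s) ^ (i * (r + 2 - i))) ^ ((n : ℝ) / ((r + 2).choose 2 : ℝ)) *
        s ^ (-(d : ℝ)) < 1) :
    ∃ C : Submodule (ZMod 2) (Fin n → ZMod 2),
      k ≤ Module.finrank (ZMod 2) C ∧
      (∀ x ∈ C, ∀ y ∈ C, x ≠ y → d ≤ hammingDist x y) ∧
      (∀ i : Fin n, ∃ R₁ R₂ : Finset (Fin n),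
        i ∉ R₁ ∧ i ∉ R₂ ∧ Disjoint R₁ R₂ ∧ R₁.card ≤ r ∧ R₂.card ≤ r ∧
        (∀ x ∈ C, ∀ y ∈ C, (∀ j ∈ R₁, x j = y j) → x i = y i) ∧
        (∀ x ∈ C, ∀ y ∈ C, (∀ j ∈ R₂, x j = y j) → x i = y i)) := by
  classical
  obtain ⟨s, ⟨hs0, hs1⟩, H⟩ := hmin
  set q : ℕ := r + 2 with hqdef
  set x : ℕ := (r + 2).choose 2 with hxdef
  have hq2 : 2 ≤ q := by omega
  have h2c : 2 * x = (r + 2) * (r + 1) := by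
    rw [hxdef]; simpa using two_mul_choose_two (r + 2)
  set D : ℕ := x + 1 - q with hDdef
  set K : ℕ := D * m with hKdef
  have hring1 : (r + 2) * (r + 1) = 2 * (r + 1) + r * (r + 1) := by ring
  have h2D : 2 * D = r * (r + 1) := by omega
  have hnmx : n = m * x := by
    have e2 : 2 * n = 2 * (m * x) := by
      calc 2 * n = m * (r + 1) * (r + 2) := hn
        _ = m * ((r + 2) * (r + 1)) := by ring
        _ = m * (2 * x) := by rw [h2c]
        _ = 2 * (m * x) := by ring
    omega
  have hnrK : n * r = K * (r + 2) := by
    apply Nat.eq_of_mul_eq_mul_left (show 0 < 2 by norm_num)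
    calc 2 * (n * r) = (2 * n) * r := by ring
      _ = m * (r + 1) * (r + 2) * r := by rw [hn]
      _ = (r * (r + 1)) * (m * (r + 2)) := by ring
      _ = (2 * D) * (m * (r + 2)) := by rw [h2D]
      _ = 2 * (K * (r + 2)) := by rw [hKdef]; ring
  have hrK : (n : ℝ) * r / ((r : ℝ) + 2) = (K : ℝ) := by
    rw [div_eq_iff (by positivity : ((r : ℝ) + 2) ≠ 0)]
    exact_mod_cast congrArg (Nat.cast : ℕ → ℝ) hnrK
  have hxpos : 0 < x := Nat.choose_pos (by omega)
  have hmx : (n : ℝ) / ((r + 2).choose 2 : ℝ) = (m : ℝ) := by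
    rw [div_eq_iff (by exact_mod_cast hxpos.ne' : ((r + 2).choose 2 : ℝ) ≠ 0)]
    exact_mod_cast congrArg (Nat.cast : ℕ → ℝ) hnmx
  set G : ℝ := gfun q s with hGdef
  have hGstmt : (((2 : ℝ) ^ (r + 2))⁻¹ * ∑ i ∈ Finset.range (r + 3), ((r + 2).choose i : ℝ) *
      (1 + s) ^ ((r + 2).choose 2 - i * (r + 2 - i)) *
      (1 - s) ^ (i * (r + 2 - i))) = G := rfl
  have hGpos : 0 < G := by
    rw [hGdef, ← block_W]
    exact Finset.sum_pos (fun c _ => ω_pos hs0 c) ⟨0, zero_mem_C1fin q⟩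
  rw [hrK, hGstmt, hmx, Real.rpow_natCast, Real.rpow_sub (by norm_num : (0:ℝ) < 2),
    Real.rpow_natCast, Real.rpow_natCast, Real.rpow_neg hs0.le, Real.rpow_natCast] at H
  -- H : ↑d * (2 ^ k / 2 ^ K) * G ^ m * (s ^ d)⁻¹ < 1
  have hsd : (0:ℝ) < s ^ d := by positivity
  have h2K : (0:ℝ) < 2 ^ K := by positivity
  have hd1 : (1:ℝ) ≤ (d : ℝ) := by exact_mod_cast hd
  have hXlt1 : (2:ℝ) ^ k / 2 ^ K * G ^ m * (s ^ d)⁻¹ < 1 := by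
    have hXnn : (0:ℝ) ≤ 2 ^ k / 2 ^ K * G ^ m * (s ^ d)⁻¹ := by positivity
    calc (2:ℝ) ^ k / 2 ^ K * G ^ m * (s ^ d)⁻¹
        ≤ (d : ℝ) * (2 ^ k / 2 ^ K * G ^ m * (s ^ d)⁻¹) := le_mul_of_one_le_left hXnn hd1
      _ = (d : ℝ) * (2 ^ k / 2 ^ K) * G ^ m * (s ^ d)⁻¹ := by ring
      _ < 1 := H
  have hX : (2:ℝ) ^ k * (G ^ m / s ^ d) < 2 ^ K := by
    calc (2:ℝ) ^ k * (G ^ m / s ^ d) = (2 ^ k / 2 ^ K * G ^ m * (s ^ d)⁻¹) * 2 ^ K := by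
          field_simp
      _ < 1 * 2 ^ K := by
          exact mul_lt_mul_of_pos_right hXlt1 h2K
      _ = 2 ^ K := one_mul _
  set Bdc : ℕ := #((C0fin q m).filter fun c => wt c < d) with hBdcdef
  have hBdle : (Bdc : ℝ) * s ^ d ≤ G ^ m := by
    have hstep1 : (Bdc : ℝ) * s ^ (d - 1)
        ≤ ∑ c ∈ (C0fin q m).filter (fun c => wt c < d), ω s c := by
      have := Finset.sum_le_sum
        (f := fun c : Fin m × Edg q → ZMod 2 => s ^ (d - 1))
        (g := fun c => ω s c)
        (s := (C0fin q m).filter (fun c => wt c < d))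
        (fun c hc => by
          show s ^ (d - 1) ≤ ω s c
          rw [ω_eq]
          exact pow_le_pow_of_le_one hs0.le hs1
            (by have := (Finset.mem_filter.1 hc).2; omega))
      rwa [Finset.sum_const, nsmul_eq_mul, ← hBdcdef] at this
    have hstep2 : ∑ c ∈ (C0fin q m).filter (fun c => wt c < d), ω s c
        ≤ ∑ c ∈ C0fin q m, ω s c :=
      Finset.sum_le_sum_of_subset_of_nonneg (Finset.filter_subset _ _)
        (fun c _ _ => ω_nonneg hs0.le c)
    have hsdd : s ^ d ≤ s ^ (d - 1) :=
      pow_le_pow_of_le_one hs0.le hs1 (by omega)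
    calc (Bdc : ℝ) * s ^ d ≤ (Bdc : ℝ) * s ^ (d - 1) :=
          mul_le_mul_of_nonneg_left hsdd (Nat.cast_nonneg _)
      _ ≤ ∑ c ∈ C0fin q m, ω s c := le_trans hstep1 hstep2
      _ = G ^ m := W0 q m s
  have hcard0 : (#(C0fin q m) : ℝ) = 2 ^ K := by
    rw [card_C0 q m hq2, ← hxdef, ← hDdef, hKdef]
  have hltreal : (2:ℝ) ^ k * Bdc < 2 ^ K := by
    have hB : (Bdc : ℝ) ≤ G ^ m / s ^ d := (le_div_iff₀ hsd).2 hBdle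
    calc (2:ℝ) ^ k * Bdc ≤ 2 ^ k * (G ^ m / s ^ d) :=
          mul_le_mul_of_nonneg_left hB (by positivity)
      _ < 2 ^ K := hX
  have hltnat : 2 ^ k * Bdc < #(C0fin q m) := by
    have : ((2 ^ k * Bdc : ℕ) : ℝ) < ((#(C0fin q m) : ℕ) : ℝ) := by
      rw [hcard0]
      push_cast
      exact hltreal
    exact_mod_cast this
  obtain ⟨M, hMmem, hgood⟩ := exists_good q m k d hk hltnat
  -- index equivalence
  have hcards : Fintype.card (Fin n) = Fintype.card (Fin m × Edg q) := by
    rw [Fintype.card_fin, Fintype.card_prod, Fintype.card_fin, card_Edg, ← hxdef, hnmx]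
  set e : Fin n ≃ (Fin m × Edg q) := Fintype.equivOfCardEq hcards with hedef
  -- linear map
  set flin : (Fin k → ZMod 2) →ₗ[ZMod 2] ((Fin m × Edg q) → ZMod 2) :=
    { toFun := fun u => ∑ i, u i • M i,
      map_add' := by
        intro u v
        simp [add_smul, Finset.sum_add_distrib],
      map_smul' := by
        intro c u
        simp [mul_smul, Finset.smul_sum] } with hflindef
  set f : (Fin k → ZMod 2) →ₗ[ZMod 2] (Fin n → ZMod 2) :=
    (LinearMap.funLeft (ZMod 2) (ZMod 2) e) ∘ₗ flin with hfdef
  have hfapp : ∀ u, f u = fun j => flin u (e j) := fun u => rfl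
  have hflapp : ∀ u, flin u = ∑ i, u i • M i := fun u => rfl
  have hwtf : ∀ u : Fin k → ZMod 2, u ≠ 0 → d ≤ wt (flin u) := by
    intro u hu
    rw [hflapp]
    exact hgood u hu
  have hinj : Function.Injective f := by
    rw [← LinearMap.ker_eq_bot]
    rw [LinearMap.ker_eq_bot']
    intro u hu0
    by_contra hu
    have h1 : d ≤ wt (flin u) := hwtf u hu
    have h2 : flin u = 0 := by
      funext p
      have := congrFun hu0 (e.symm p)
      rw [hfapp] at this
      simpa using this
    rw [h2, wt_zero] at h1
    omega
  refine ⟨LinearMap.range f, ?_, ?_, ?_⟩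
  · rw [LinearMap.finrank_range_of_inj hinj, Module.finrank_pi, Fintype.card_fin]
  · intro a ha b hb hab
    obtain ⟨u, rfl⟩ := LinearMap.mem_range.1 ha
    obtain ⟨v, rfl⟩ := LinearMap.mem_range.1 hb
    have huv : u - v ≠ 0 := sub_ne_zero.2 (fun hc => hab (by rw [hc]))
    have h1 : d ≤ wt (flin (u - v)) := hwtf _ huv
    rw [hammingDist_comm, hammingDist_eq_hammingNorm, neg_add_eq_sub, ← map_sub]
    rw [hfapp]
    rw [← wt_eq_hammingNorm]
    rwa [wt_reindex e (flin (u - v))]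
  · intro i
    set p : Fin m × Edg q := e i with hpdef
    set b : Fin m := p.1 with hbdef
    set ed : Edg q := p.2 with heddef
    have hei : e i = (b, ed) := rfl
    have hkey : ∀ (v : Fin q), inc v ed → ∀ a ∈ LinearMap.range f,
        a i = ∑ ed' ∈ (univ.filter fun ed' : Edg q => inc v ed').erase ed,
          a (e.symm (b, ed')) := by
      intro v hv a ha
      obtain ⟨u, rfl⟩ := LinearMap.mem_range.1 ha
      have hcmem : (∑ j, u j • M j) ∈ C0fin q m := C0fin_sum_mem q m M hMmem u
      have hchk : check v (fun e' => (∑ j, u j • M j) (b, e')) = 0 :=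
        (Finset.mem_filter.1 hcmem).2 b v
      have hedmem : ed ∈ univ.filter fun ed' : Edg q => inc v ed' :=
        Finset.mem_filter.2 ⟨mem_univ _, hv⟩
      have hsplit := Finset.add_sum_erase (univ.filter fun ed' : Edg q => inc v ed')
        (fun ed' => (∑ j, u j • M j) (b, ed')) hedmem
      have hcbed : (∑ j, u j • M j) (b, ed)
          = ∑ ed' ∈ (univ.filter fun ed' : Edg q => inc v ed').erase ed,
            (∑ j, u j • M j) (b, ed') := by
        apply zmod2_eq_of_add_eq_zero
        rw [hsplit]
        rw [check] at hchk
        exact hchk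
      have hfi : (f u) i = (∑ j, u j • M j) (b, ed) := by
        rw [hfapp]
        show flin u (e i) = _
        rw [hei, hflapp]
      rw [hfi, hcbed]
      refine Finset.sum_congr rfl fun ed' _ => ?_
      rw [hfapp]
      have hterm : (fun j => flin u (e j)) (e.symm (b, ed'))
          = (∑ j, u j • M j) (b, ed') := by
        show flin u (e (e.symm (b, ed'))) = _
        rw [Equiv.apply_symm_apply, hflapp]
      exact hterm.symm
    have hv1 : inc ed.1.1 ed := Or.inl rfl
    have hv2 : inc ed.1.2 ed := Or.inr rfl
    have hiR : ∀ v : Fin q, i ∉ ((univ.filter fun ed' : Edg q => inc v ed').erase ed).image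
        (fun ed' => e.symm (b, ed')) := by
      intro v hiv
      obtain ⟨ed', hed', heq⟩ := Finset.mem_image.1 hiv
      have h1 : (b, ed') = e i := (Equiv.symm_apply_eq e).1 heq
      rw [hei] at h1
      exact (Finset.mem_erase.1 hed').1 (Prod.ext_iff.1 h1).2
    have hRcard : ∀ v : Fin q, inc v ed →
        #(((univ.filter fun ed' : Edg q => inc v ed').erase ed).image
          (fun ed' => e.symm (b, ed'))) ≤ r := by
      intro v hv
      have hedmem : ed ∈ univ.filter fun ed' : Edg q => inc v ed' :=
        Finset.mem_filter.2 ⟨mem_univ _, hv⟩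
      have h1 : #((univ.filter fun ed' : Edg q => inc v ed').erase ed)
          = #(univ.filter fun ed' : Edg q => inc v ed') - 1 :=
        Finset.card_erase_of_mem hedmem
      have h2 := card_inc_le v
      have h3 : q - 1 = r + 1 := by omega
      calc #(((univ.filter fun ed' : Edg q => inc v ed').erase ed).image
          (fun ed' => e.symm (b, ed'))) ≤ #((univ.filter fun ed' : Edg q => inc v ed').erase ed) :=
            Finset.card_image_le
        _ ≤ r := by omega
    have hrec : ∀ v : Fin q, inc v ed → ∀ a ∈ LinearMap.range f, ∀ a' ∈ LinearMap.range f,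
        (∀ j ∈ ((univ.filter fun ed' : Edg q => inc v ed').erase ed).image
          (fun ed' => e.symm (b, ed')), a j = a' j) → a i = a' i := by
      intro v hv a ha a' ha' hagree
      rw [hkey v hv a ha, hkey v hv a' ha']
      refine Finset.sum_congr rfl fun ed' hed' => ?_
      exact hagree _ (Finset.mem_image_of_mem _ hed')
    have hdisj : Disjoint
        (((univ.filter fun ed' : Edg q => inc ed.1.1 ed').erase ed).image
          (fun ed' => e.symm (b, ed')))
        (((univ.filter fun ed' : Edg q => inc ed.1.2 ed').erase ed).image
          (fun ed' => e.symm (b, ed'))) := by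
      rw [Finset.disjoint_left]
      intro j hj1 hj2
      obtain ⟨ed1, hed1, heq1⟩ := Finset.mem_image.1 hj1
      obtain ⟨ed2, hed2, heq2⟩ := Finset.mem_image.1 hj2
      have he12 : ed1 = ed2 := by
        have h' : ((b, ed1) : Fin m × Edg q) = (b, ed2) :=
          e.symm.injective (heq1.trans heq2.symm)
        exact (Prod.ext_iff.1 h').2
      subst he12
      have hne : ed1 ≠ ed := (Finset.mem_erase.1 hed1).1
      have hinc1 : inc ed.1.1 ed1 := (Finset.mem_filter.1 (Finset.mem_erase.1 hed1).2).2
      have hinc2 : inc ed.1.2 ed1 := (Finset.mem_filter.1 (Finset.mem_erase.1 hed2).2).2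
      have hlt : ed.1.1 < ed.1.2 := ed.2
      have hlt1 : ed1.1.1 < ed1.1.2 := ed1.2
      rcases hinc1 with h1 | h1 <;> rcases hinc2 with h2 | h2
      · exact absurd (h1.symm.trans h2) (ne_of_lt hlt)
      · exact hne (Subtype.ext (Prod.ext h1 h2))
      · rw [h2, h1] at hlt1
        exact absurd hlt1 (lt_asymm hlt)
      · exact absurd (h1.symm.trans h2) (ne_of_lt hlt)
    exact ⟨((univ.filter fun ed' : Edg q => inc ed.1.1 ed').erase ed).image
        (fun ed' => e.symm (b, ed')),
      ((univ.filter fun ed' : Edg q => inc ed.1.2 ed').erase ed).image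
        (fun ed' => e.symm (b, ed')),
      hiR ed.1.1, hiR ed.1.2, hdisj, hRcard ed.1.1 hv1, hRcard ed.1.2 hv2,
      hrec ed.1.1 hv1, hrec ed.1.2 hv2⟩
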